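/- Let G be a finite simple graph containing no induced house, hole, domino or gem (equivalently, a distance-hereditary graph), let x be a vertex of G, and let u, v be two vertices at distance exactly 2 from x. If u and v are adjacent, then N(u) ∩ N(x) = N(v) ∩ N(x). (Proposition 2(i), adjacent case.) -/

import Mathlib

set_option maxHeartbeats 1000000


open SimpleGraph

/-- `G` is distance-hereditary: in every connected induced subgraph,
distances agree with those in `G`. -/
def DistanceHereditary {V : Type*} (G : SimpleGraph V) : Prop :=
  ∀ S : Set V, (G.induce S).Connected →
    ∀ u v : S, (G.induce S).dist u v = G.dist u.1 v.1

/-- `G` contains `H` as an induced subgraph: there is an injection of the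
vertices of `H` into those of `G` preserving adjacency and non-adjacency. -/
def ContainsInduced {α β : Type*} (H : SimpleGraph α) (G : SimpleGraph β) : Prop :=
  ∃ f : α → β, Function.Injective f ∧ ∀ a b : α, H.Adj a b ↔ G.Adj (f a) (f b)

/-- The house: vertices a,b,c,d,e = 0,1,2,3,4; edges ab,bc,cd,ad,ae,be. -/
def house : SimpleGraph (Fin 5) :=
  SimpleGraph.fromEdgeSet {s(0,1), s(1,2), s(2,3), s(0,3), s(0,4), s(1,4)}

/-- The gem: vertices a,b,c,d,e = 0,1,2,3,4; edges ab,bc,cd,ae,be,ce,de. -/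
def gem : SimpleGraph (Fin 5) :=
  SimpleGraph.fromEdgeSet {s(0,1), s(1,2), s(2,3), s(0,4), s(1,4), s(2,4), s(3,4)}

/-- The domino: vertices a,b,c,d,e,h = 0,1,2,3,4,5; edges ab,bc,cd,ad,be,eh,ch. -/
def domino : SimpleGraph (Fin 6) :=
  SimpleGraph.fromEdgeSet {s(0,1), s(1,2), s(2,3), s(0,3), s(1,4), s(4,5), s(2,5)}

/-- `G` is (house, hole, domino, gem)-free. A hole is an induced `C_n`, `n ≥ 5`. -/
def HHDGFree {V : Type*} (G : SimpleGraph V) : Prop :=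
  ¬ ContainsInduced house G ∧
  (∀ n : ℕ, 5 ≤ n → ¬ ContainsInduced (SimpleGraph.cycleGraph n) G) ∧
  ¬ ContainsInduced domino G ∧
  ¬ ContainsInduced gem G

/-- A stable (independent) set: pairwise non-adjacent vertices. -/
def IsStableSet {V : Type*} (G : SimpleGraph V) (s : Set V) : Prop :=
  s.Pairwise fun a b => ¬ G.Adj a b

/-- `T` is a cycle-transversal of `G`: every cycle of `G` contains a vertex of `T`. -/
def IsCycleTransversal {V : Type*} (G : SimpleGraph V) (T : Set V) : Prop :=
  ∀ ⦃v : V⦄ (c : G.Walk v v), c.IsCycle → ∃ w ∈ c.support, w ∈ T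

/-- A clique cycle-transversal (cct): a cycle-transversal that is a clique. -/
def IsCCT {V : Type*} (G : SimpleGraph V) (T : Set V) : Prop :=
  G.IsClique T ∧ IsCycleTransversal G T

lemma inj5 {V : Type*} {x a u v b : V} (h1 : x ≠ a) (h2 : x ≠ u) (h3 : x ≠ v) (h4 : x ≠ b)
    (h5 : a ≠ u) (h6 : a ≠ v) (h7 : a ≠ b) (h8 : u ≠ v) (h9 : u ≠ b) (h10 : v ≠ b) :
    Function.Injective ![x, a, u, v, b] := by
  intro i j hij
  fin_cases i <;> fin_cases j <;> simp_all

lemma key {V : Type*} (G : SimpleGraph V) (hG : HHDGFree G) (x u v a b : V)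
    (hxu : ¬G.Adj x u) (hxv : ¬G.Adj x v) (huv : G.Adj u v)
    (hxa : G.Adj x a) (hau : G.Adj a u) (hav : ¬G.Adj a v)
    (hxb : G.Adj x b) (hbv : G.Adj b v) : False := by
  obtain ⟨hHouse, hHole, hDomino, hGem⟩ := hG
  have hax := hxa.symm
  have hua := hau.symm
  have hvu := huv.symm
  have hbx := hxb.symm
  have hvb := hbv.symm
  have hux : ¬G.Adj u x := fun h => hxu h.symm
  have hvx : ¬G.Adj v x := fun h => hxv h.symm
  have hva : ¬G.Adj v a := fun h => hav h.symm
  -- distinctness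
  have n1 : x ≠ a := hxa.ne

  have n2 : x ≠ u := fun h => hxv (h ▸ huv)
  have n3 : x ≠ v := fun h => hxu (h ▸ hvu)
  have n4 : x ≠ b := hxb.ne
  have n5 : a ≠ u := hau.ne
  have n6 : a ≠ v := fun h => hvx (h ▸ hax)
  have n7 : a ≠ b := fun h => hav (by rw [h]; exact hbv)
  have n8 : u ≠ v := huv.ne
  have n9 : u ≠ b := fun h => hux (by rw [h]; exact hbx)
  have n10 : v ≠ b := hbv.ne.symm
  by_cases hbu : G.Adj b u <;> by_cases hab : G.Adj a b
  · -- gem: f = ![x,a,u,v,b]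
    have hub := hbu.symm
    have hba := hab.symm
    refine hGem ⟨![x,a,u,v,b], inj5 n1 n2 n3 n4 n5 n6 n7 n8 n9 n10, ?_⟩
    intro i j; fin_cases i <;> fin_cases j <;>
      simp only [Matrix.cons_val_zero, Matrix.cons_val_one, Matrix.head_cons,
        Matrix.cons_val_two, Matrix.tail_cons, Matrix.cons_val_three, Matrix.cons_val_four,
        Matrix.cons_val_succ] <;>
      first
      | exact iff_of_true (by simp [gem]) (by assumption)
      | exact iff_of_false (by simp [gem]) (by assumption)
      | exact iff_of_false (by simp [gem]) (G.loopless.irrefl _)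
  · -- house: f = ![u,b,x,a,v]
    have hub := hbu.symm
    have hba : ¬G.Adj b a := fun h => hab h.symm
    refine hHouse ⟨![u,b,x,a,v],
      inj5 n9 n2.symm n5.symm n8 n4.symm n7.symm n10.symm n1 n3 n6, ?_⟩
    intro i j; fin_cases i <;> fin_cases j <;>
      simp only [Matrix.cons_val_zero, Matrix.cons_val_one, Matrix.head_cons,
        Matrix.cons_val_two, Matrix.tail_cons, Matrix.cons_val_three, Matrix.cons_val_four,
        Matrix.cons_val_succ] <;>
      first
      | exact iff_of_true (by simp [house]) (by assumption)
      | exact iff_of_false (by simp [house]) (by assumption)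
      | exact iff_of_false (by simp [house]) (G.loopless.irrefl _)
  · -- house: f = ![a,b,v,u,x]
    have hba := hab.symm
    have hub : ¬G.Adj u b := fun h => hbu h.symm
    refine hHouse ⟨![a,b,v,u,x],
      inj5 n7 n6 n5 n1.symm n10.symm n9.symm n4.symm n8.symm n3.symm n2.symm, ?_⟩
    intro i j; fin_cases i <;> fin_cases j <;>
      simp only [Matrix.cons_val_zero, Matrix.cons_val_one, Matrix.head_cons,
        Matrix.cons_val_two, Matrix.tail_cons, Matrix.cons_val_three, Matrix.cons_val_four,
        Matrix.cons_val_succ] <;>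
      first
      | exact iff_of_true (by simp [house]) (by assumption)
      | exact iff_of_false (by simp [house]) (by assumption)
      | exact iff_of_false (by simp [house]) (G.loopless.irrefl _)
  · -- C5: f = ![x,a,u,v,b]
    have hba : ¬G.Adj b a := fun h => hab h.symm
    have hub : ¬G.Adj u b := fun h => hbu h.symm
    refine hHole 5 le_rfl ⟨![x,a,u,v,b], inj5 n1 n2 n3 n4 n5 n6 n7 n8 n9 n10, ?_⟩
    intro i j; fin_cases i <;> fin_cases j <;>
      simp only [Matrix.cons_val_zero, Matrix.cons_val_one, Matrix.head_cons,
        Matrix.cons_val_two, Matrix.tail_cons, Matrix.cons_val_three, Matrix.cons_val_four,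
        Matrix.cons_val_succ] <;>
      first
      | exact iff_of_true (by decide) (by assumption)
      | exact iff_of_false (by decide) (by assumption)
      | exact iff_of_false (by decide) (G.loopless.irrefl _)

/-- Proposition 2(i), adjacent case. -/
theorem prop2i_adjacent {V : Type*} [Fintype V] (G : SimpleGraph V) (hG : HHDGFree G)
    (x u v : V) (hu : G.dist x u = 2) (hv : G.dist x v = 2) (huv : G.Adj u v) :
    G.neighborSet u ∩ G.neighborSet x = G.neighborSet v ∩ G.neighborSet x := by
  have claim : ∀ p q w : V, G.dist x p = 2 → G.dist x q = 2 → G.Adj p q →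
      G.Adj p w → G.Adj x w → G.Adj q w := by
    intro p q w hp hq hpq hpw hxw
    by_contra hqw
    have hxp : ¬G.Adj x p := fun h => by simp [dist_eq_one_iff_adj.mpr h] at hp
    have hxq : ¬G.Adj x q := fun h => by simp [dist_eq_one_iff_adj.mpr h] at hq
    obtain ⟨pa, hpa⟩ := exists_walk_of_dist_ne_zero (u := x) (v := q) (by rw [hq]; exact two_ne_zero)
    rw [hq] at hpa
    cases pa with
    | nil => simp at hpa
    | cons h1 r =>
      cases r with
      | nil => simp at hpa
      | cons h2 s =>
        cases s with
        | nil =>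
          exact key G hG x p q w _ hxp hxq hpq hxw hpw.symm
            (fun h => hqw h.symm) h1 h2
        | cons h3 t => simp [SimpleGraph.Walk.length_cons] at hpa
  ext w
  simp only [Set.mem_inter_iff, SimpleGraph.mem_neighborSet]
  constructor
  · rintro ⟨h1, h2⟩
    exact ⟨claim u v w hu hv huv h1 h2, h2⟩
  · rintro ⟨h1, h2⟩
    exact ⟨claim v u w hv hu huv.symm h1 h2, h2⟩
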